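/- Theorem 1, (1)⇔(2): A dataset {p^N}_{N∈𝒩} is consistent with the general linear-in-means model (GLM) if and only if for every agent i ∈ 𝒜 the collection of sets {co⁻¹(Δ(p^N), p_i^N)}_{N∈𝒩_i} has a point of mutual intersection, i.e. ⋂_{N∈𝒩_i} co⁻¹(Δ(p^N), p_i^N) ≠ ∅. -/

import Mathlib

open Finset
open scoped Classical

noncomputable section

/-- The simplex Δ(X) of probability vectors on a finite set X. -/
def simplex (X : Type*) [Fintype X] : Set (X → ℝ) :=
  {v | (∀ x, 0 ≤ v x) ∧ (∑ x, v x) = 1}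

/-- The inverse cone co⁻¹(Δ(p^N), p_i^N). -/
def invCone {X A : Type*} [Fintype X] [DecidableEq A]
    (p : Finset A → A → X → ℝ) (N : Finset A) (i : A) : Set (X → ℝ) :=
  {v | v ∈ simplex X ∧ ∃ γ : A → ℝ, (∀ j ∈ N.erase i, γ j ≤ 0) ∧
    (∑ j ∈ N, γ j) = 1 ∧ v = ∑ j ∈ N, γ j • p N j}

/-- Consistency with the general linear-in-means model (GLM). -/
def GLMConsistent {X A : Type*} [Fintype X] [DecidableEq A]
    (𝒩 : Finset (Finset A)) (p : Finset A → A → X → ℝ) : Prop :=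
  ∃ v : A → X → ℝ, (∀ i, v i ∈ simplex X) ∧
    ∀ N ∈ 𝒩, ∀ i ∈ N, ∃ π : A → ℝ,
      (∀ j ∈ N, 0 ≤ π j) ∧ 0 < π i ∧ (∑ j ∈ N, π j) = 1 ∧
      p N i = π i • v i + ∑ j ∈ N.erase i, π j • p N j

private lemma aux_solve {X A : Type*} [Fintype X] [DecidableEq A] (s : Finset A)
    (f : A → ℝ) (g : A → X → ℝ) (a b : X → ℝ) (c : ℝ) (hc : c ≠ 0)
    (h : a = c • b + ∑ j ∈ s, f j • g j) :
    b = c⁻¹ • a + ∑ j ∈ s, (-(f j / c)) • g j := by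
  rw [h, smul_add, smul_smul, inv_mul_cancel₀ hc, one_smul, Finset.smul_sum, add_assoc,
    ← Finset.sum_add_distrib]
  rw [Finset.sum_eq_zero, add_zero]
  intro j hj
  rw [smul_smul, ← add_smul]
  have : c⁻¹ * f j + -(f j / c) = 0 := by field_simp; ring
  rw [this, zero_smul]

private lemma aux_sum {A : Type*} [DecidableEq A] (N : Finset A) (i : A) (hiN : i ∈ N)
    (f : A → ℝ) (hf : (∑ j ∈ N, f j) = 1) (hfi : f i ≠ 0) :
    (∑ j ∈ N, (if j = i then (f i)⁻¹ else -(f j / f i))) = 1 := by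
  rw [← Finset.add_sum_erase _ _ hiN, if_pos rfl,
    Finset.sum_congr rfl (fun j hj => if_neg (Finset.mem_erase.mp hj).1)]
  have h1 : f i + ∑ j ∈ N.erase i, f j = 1 := by
    rw [Finset.add_sum_erase _ _ hiN]; exact hf
  have h2 : ∑ j ∈ N.erase i, -(f j / f i) = -((∑ j ∈ N.erase i, f j) / f i) := by
    rw [Finset.sum_div, ← Finset.sum_neg_distrib]
  rw [h2]
  field_simp
  linarith

/-- Theorem 1, (1) ⇔ (2): consistency with GLM is equivalent to each agent's inverse
cones having a point of mutual intersection. -/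
theorem glm_iff_intersection {X A : Type*} [Fintype X] [Fintype A] [DecidableEq A]
    (hX : 2 ≤ Fintype.card X) (hA : 2 ≤ Fintype.card A)
    (𝒩 : Finset (Finset A)) (h𝒩 : 𝒩.Nonempty) (h𝒩' : ∀ N ∈ 𝒩, N.Nonempty)
    (p : Finset A → A → X → ℝ) (hp : ∀ N ∈ 𝒩, ∀ i ∈ N, p N i ∈ simplex X) :
    GLMConsistent 𝒩 p ↔
      ∀ i : A, (⋂ N ∈ 𝒩.filter (fun N => i ∈ N), invCone p N i).Nonempty := by
  constructor
  · rintro ⟨v, hv, hglm⟩ i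
    refine ⟨v i, Set.mem_iInter₂.mpr fun N hN => ?_⟩
    obtain ⟨hN𝒩, hiN⟩ := Finset.mem_filter.mp hN
    obtain ⟨π, hπ0, hπi, hπsum, heq⟩ := hglm N hN𝒩 i hiN
    have hc : π i ≠ 0 := ne_of_gt hπi
    refine ⟨hv i, fun j => if j = i then (π i)⁻¹ else -(π j / π i), ?_, ?_, ?_⟩
    · intro j hj
      obtain ⟨hji, hjN⟩ := Finset.mem_erase.mp hj
      simp only [if_neg hji]
      exact neg_nonpos.mpr (div_nonneg (hπ0 j hjN) hπi.le)
    · exact aux_sum N i hiN π hπsum hc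
    · rw [← Finset.add_sum_erase _ (fun j => (if j = i then (π i)⁻¹ else -(π j / π i)) • p N j)
        hiN, if_pos rfl,
        Finset.sum_congr rfl (fun j hj => by rw [if_neg (Finset.mem_erase.mp hj).1])]
      exact aux_solve (N.erase i) π (p N) (p N i) (v i) (π i) hc heq
  · intro h
    have hdS : (fun _ : X => (Fintype.card X : ℝ)⁻¹) ∈ simplex X := by
      have hcard : (0 : ℝ) < Fintype.card X := by
        have : 0 < Fintype.card X := by omega
        exact_mod_cast this
      constructor
      · intro x; positivity
      · simp [Finset.sum_const, Finset.card_univ]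
        field_simp
    choose w hw using h
    set v : A → X → ℝ := fun i =>
      if (𝒩.filter (fun N => i ∈ N)).Nonempty then w i
      else (fun _ : X => (Fintype.card X : ℝ)⁻¹) with hvdef
    refine ⟨v, ?_, ?_⟩
    · intro i
      by_cases hi : (𝒩.filter (fun N => i ∈ N)).Nonempty
      · rw [hvdef]; simp only [if_pos hi]
        obtain ⟨N₀, hN₀⟩ := hi
        exact (Set.mem_iInter₂.mp (hw i) N₀ hN₀).1
      · rw [hvdef]; simp only [if_neg hi]; exact hdS
    · intro N hN i hiN
      have hfil : N ∈ 𝒩.filter (fun M => i ∈ M) := Finset.mem_filter.mpr ⟨hN, hiN⟩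
      have hne : (𝒩.filter (fun N => i ∈ N)).Nonempty := ⟨N, hfil⟩
      have hvi : v i = w i := by rw [hvdef]; simp only [if_pos hne]
      obtain ⟨hsX, γ, hγle, hγsum, hγeq⟩ := Set.mem_iInter₂.mp (hw i) N hfil
      have h1 : γ i + ∑ j ∈ N.erase i, γ j = 1 := by
        rw [Finset.add_sum_erase _ _ hiN]; exact hγsum
      have h2 : ∑ j ∈ N.erase i, γ j ≤ 0 := Finset.sum_nonpos hγle
      have hγi : 0 < γ i := by linarith
      have hc : γ i ≠ 0 := ne_of_gt hγi
      refine ⟨fun j => if j = i then (γ i)⁻¹ else -(γ j / γ i), ?_, ?_, ?_, ?_⟩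
      · intro j hjN
        by_cases hji : j = i
        · subst hji; simp only [if_pos rfl]; exact (inv_pos.mpr hγi).le
        · simp only [if_neg hji]
          exact neg_nonneg.mpr
            (div_nonpos_of_nonpos_of_nonneg (hγle j (Finset.mem_erase.mpr ⟨hji, hjN⟩)) hγi.le)
      · simp only [if_pos rfl]; exact inv_pos.mpr hγi
      · exact aux_sum N i hiN γ hγsum hc
      · have hsplit : w i = γ i • p N i + ∑ j ∈ N.erase i, γ j • p N j := by
          rw [hγeq, ← Finset.add_sum_erase _ (fun j => γ j • p N j) hiN]
        beta_reduce
        rw [hvi, if_pos rfl,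
          Finset.sum_congr rfl (fun j hj => by rw [if_neg (Finset.mem_erase.mp hj).1])]
        exact aux_solve (N.erase i) γ (p N) (w i) (p N i) (γ i) hc hsplit
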